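/- Let q, r : ℝ → ℝ be three times differentiable and fix λ ∈ ℝ. Define L(x) = [[-λ, q(x)],[r(x), λ]] and U₄(x) = [[-λ³ + (1/2)qrλ - (1/4)rq' + (1/4)qr', qλ² - (1/2)q'λ + (1/4)q'' - (1/2)q²r],[rλ² + (1/2)r'λ + (1/4)r'' - (1/2)qr², λ³ - (1/2)qrλ + (1/4)rq' - (1/4)qr']] (all functions evaluated at x, primes denoting d/dx). Then for all x, U₄(x)·L(x) - L(x)·U₄(x) + U₄'(x) equals [[0, (1/4)q'''(x) - (3/2)q(x)r(x)q'(x)],[(1/4)r'''(x) - (3/2)q(x)r(x)r'(x), 0]]. -/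

import Mathlib

/-- The Lax representation of the fourth AKNS flow: for the AKNS Lax matrix
`L = !![-λ, q; r, λ]` and the auxiliary matrix `U₄`, the combination
`U₄·L - L·U₄ + (U₄)ₓ` equals the right-hand side of the fourth AKNS flow. -/
theorem akns_fourth_flow_lax (q r : ℝ → ℝ) (lam : ℝ)
    (hq : Differentiable ℝ q) (hq' : Differentiable ℝ (deriv q))
    (hq'' : Differentiable ℝ (deriv (deriv q)))
    (hr : Differentiable ℝ r) (hr' : Differentiable ℝ (deriv r))
    (hr'' : Differentiable ℝ (deriv (deriv r))) :
    ∀ x : ℝ,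
      let L : ℝ → Matrix (Fin 2) (Fin 2) ℝ := fun y => !![-lam, q y; r y, lam]
      let U₄ : ℝ → Matrix (Fin 2) (Fin 2) ℝ := fun y =>
        !![-lam ^ 3 + 1 / 2 * q y * r y * lam - 1 / 4 * r y * deriv q y
              + 1 / 4 * q y * deriv r y,
           q y * lam ^ 2 - 1 / 2 * deriv q y * lam + 1 / 4 * deriv (deriv q) y
              - 1 / 2 * (q y) ^ 2 * r y;
           r y * lam ^ 2 + 1 / 2 * deriv r y * lam + 1 / 4 * deriv (deriv r) y
              - 1 / 2 * q y * (r y) ^ 2,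
           lam ^ 3 - 1 / 2 * q y * r y * lam + 1 / 4 * r y * deriv q y
              - 1 / 4 * q y * deriv r y]
      U₄ x * L x - L x * U₄ x + Matrix.of (fun i j => deriv (fun y => U₄ y i j) x)
        = !![0, 1 / 4 * deriv (deriv (deriv q)) x - 3 / 2 * q x * r x * deriv q x;
             1 / 4 * deriv (deriv (deriv r)) x - 3 / 2 * q x * r x * deriv r x, 0] := by
  intro x L U₄
  have hqx := (hq x).hasDerivAt
  have hrx := (hr x).hasDerivAt
  have hq'x := (hq' x).hasDerivAt
  have hr'x := (hr' x).hasDerivAt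
  have hq''x := (hq'' x).hasDerivAt
  have hr''x := (hr'' x).hasDerivAt
  have H11 : HasDerivAt (fun y => -lam ^ 3 + 1 / 2 * q y * r y * lam
      - 1 / 4 * r y * deriv q y + 1 / 4 * q y * deriv r y) _ x :=
    (((((hqx.const_mul (1/2)).mul hrx).mul_const lam).const_add (-lam^3)).sub
      ((hrx.const_mul (1/4)).mul hq'x)).add ((hqx.const_mul (1/4)).mul hr'x)
  have H12 : HasDerivAt (fun y => q y * lam ^ 2 - 1 / 2 * deriv q y * lam
      + 1 / 4 * deriv (deriv q) y - 1 / 2 * (q y) ^ 2 * r y) _ x :=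
    (((hqx.mul_const (lam^2)).sub ((hq'x.const_mul (1/2)).mul_const lam)).add
      (hq''x.const_mul (1/4))).sub (((hqx.pow 2).const_mul (1/2)).mul hrx)
  have H21 : HasDerivAt (fun y => r y * lam ^ 2 + 1 / 2 * deriv r y * lam
      + 1 / 4 * deriv (deriv r) y - 1 / 2 * q y * (r y) ^ 2) _ x :=
    (((hrx.mul_const (lam^2)).add ((hr'x.const_mul (1/2)).mul_const lam)).add
      (hr''x.const_mul (1/4))).sub (((hqx.const_mul (1/2)).mul (hrx.pow 2)))
  have H22 : HasDerivAt (fun y => lam ^ 3 - 1 / 2 * q y * r y * lam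
      + 1 / 4 * r y * deriv q y - 1 / 4 * q y * deriv r y) _ x :=
    (((((hqx.const_mul (1/2)).mul hrx).mul_const lam).const_sub (lam^3)).add
      ((hrx.const_mul (1/4)).mul hq'x)).sub ((hqx.const_mul (1/4)).mul hr'x)
  ext i j
  fin_cases i <;> fin_cases j <;>
    simp only [L, U₄, Matrix.add_apply, Matrix.sub_apply, Matrix.mul_apply,
      Matrix.of_apply, Fin.sum_univ_two, Matrix.cons_val', Matrix.cons_val_zero,
      Matrix.cons_val_one, Matrix.head_cons, Matrix.head_fin_const, Matrix.empty_val',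
      Matrix.cons_val_fin_one, Fin.isValue, Fin.mk_zero, Fin.mk_one]
  · rw [H11.deriv]; ring
  · rw [H12.deriv, Pi.pow_apply]; ring
  · rw [H21.deriv]; ring
  · rw [H22.deriv]; ring
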